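/- Let k ≥ 1, let μ_0, μ_1, …, μ_t be fractional configurations of mass k on the line, and let r_1, …, r_t ∈ ℝ satisfy μ_i(r_i) ≥ 1 for every 1 ≤ i ≤ t. Then there exists ω ∈ (0, 1] such that for every 1 ≤ i ≤ t the rounded configuration I_ω(μ_i) contains a server at r_i, and ∑_{i=1}^t D(I_ω(μ_{i-1}), I_ω(μ_i)) ≤ ∑_{i=1}^t W(μ_{i-1}, μ_i); that is, the randomized rounding can be derandomized to an integral solution whose cost does not exceed the fractional cost. -/

import Mathlib

open MeasureTheory

/-- The cumulative mass function `F_μ(x) = ∑_{y ≤ x} μ(y)` of a finitely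
supported mass function `μ` on the line. -/
noncomputable def cumMass (μ : ℝ →₀ ℝ) (x : ℝ) : ℝ :=
  ∑ y ∈ μ.support.filter (fun y => y ≤ x), μ y

/-- The quantile function `f_μ(y)`: the least point of the support of `μ` whose
cumulative mass is at least `y`. -/
noncomputable def quantile (μ : ℝ →₀ ℝ) (y : ℝ) : ℝ :=
  sInf {x | x ∈ μ.support ∧ y ≤ cumMass μ x}

/-- The rounded configuration `I_ω(μ) = (f_μ(ω + j))_{j < k}`. -/
noncomputable def roundCfg (k : ℕ) (μ : ℝ →₀ ℝ) (ω : ℝ) : Fin k → ℝ :=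
  fun j => quantile μ (ω + (j : ℕ))

/-- The matching distance between two `k`-tuples of reals. -/
noncomputable def matchDistR {k : ℕ} (a b : Fin k → ℝ) : ℝ :=
  ⨅ σ : Equiv.Perm (Fin k), ∑ j, |a j - b (σ j)|

/-- The transport cost between two finitely supported mass functions on the
line: the infimum over finitely supported nonnegative couplings `π` with
marginals `μ` and `ν` of `∑_{x,y} π(x,y)·|x−y|`. -/
noncomputable def transportCost (μ ν : ℝ →₀ ℝ) : ℝ :=
  sInf {c | ∃ π : ℝ × ℝ →₀ ℝ, (∀ p, 0 ≤ π p) ∧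
    (∀ x, ∑ p ∈ π.support.filter (fun p => p.1 = x), π p = μ x) ∧
    (∀ y, ∑ p ∈ π.support.filter (fun p => p.2 = y), π p = ν y) ∧
    c = ∑ p ∈ π.support, π p * |p.1 - p.2|}


open Set

namespace Round15


variable {μ : ℝ →₀ ℝ} {k : ℕ}

lemma cumMass_nonneg (h0 : ∀ x, 0 ≤ μ x) (x : ℝ) : 0 ≤ cumMass μ x :=
  Finset.sum_nonneg fun y _ => h0 y

lemma cumMass_mono (h0 : ∀ x, 0 ≤ μ x) {x x' : ℝ} (h : x ≤ x') :
    cumMass μ x ≤ cumMass μ x' :=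
  Finset.sum_le_sum_of_subset_of_nonneg
    (Finset.monotone_filter_right _ (fun y _ hy => le_trans hy h))
    (fun y _ _ => h0 y)

lemma cumMass_le_total (h0 : ∀ x, 0 ≤ μ x) (x : ℝ) :
    cumMass μ x ≤ ∑ y ∈ μ.support, μ y :=
  Finset.sum_le_sum_of_subset_of_nonneg (Finset.filter_subset _ _) (fun y _ _ => h0 y)

lemma support_nonempty (hk : 1 ≤ k) (hm : ∑ x ∈ μ.support, μ x = (k : ℝ)) :
    μ.support.Nonempty := by
  rcases Finset.eq_empty_or_nonempty μ.support with h | h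
  · exfalso; rw [h, Finset.sum_empty] at hm
    have : (1:ℝ) ≤ (k:ℝ) := by exact_mod_cast hk
    linarith
  · exact h

/-- The set whose infimum defines the quantile. -/
def qset (μ : ℝ →₀ ℝ) (y : ℝ) : Set ℝ := {x | x ∈ μ.support ∧ y ≤ cumMass μ x}

lemma quantile_eq (μ : ℝ →₀ ℝ) (y : ℝ) : quantile μ y = sInf (qset μ y) := rfl

lemma qset_finite (μ : ℝ →₀ ℝ) (y : ℝ) : (qset μ y).Finite :=
  Set.Finite.subset μ.support.finite_toSet (fun x hx => hx.1)

lemma cumMass_max' (hne : μ.support.Nonempty) :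
    cumMass μ (μ.support.max' hne) = ∑ y ∈ μ.support, μ y := by
  unfold cumMass
  congr 1
  apply Finset.filter_true_of_mem
  intro y hy; exact Finset.le_max' _ _ hy

lemma qset_nonempty (hk : 1 ≤ k) (h0 : ∀ x, 0 ≤ μ x)
    (hm : ∑ x ∈ μ.support, μ x = (k : ℝ)) {y : ℝ} (hy : y ≤ (k : ℝ)) :
    (qset μ y).Nonempty := by
  have hne := support_nonempty hk hm
  refine ⟨μ.support.max' hne, μ.support.max'_mem hne, ?_⟩
  rw [cumMass_max' hne, hm]; exact hy

lemma quantile_mem (hk : 1 ≤ k) (h0 : ∀ x, 0 ≤ μ x)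
    (hm : ∑ x ∈ μ.support, μ x = (k : ℝ)) {y : ℝ} (hy : y ≤ (k : ℝ)) :
    quantile μ y ∈ qset μ y :=
  (qset_nonempty hk h0 hm hy).csInf_mem (qset_finite μ y)

lemma quantile_le_iff (hk : 1 ≤ k) (h0 : ∀ x, 0 ≤ μ x)
    (hm : ∑ x ∈ μ.support, μ x = (k : ℝ)) {y x : ℝ} (hy0 : 0 < y) (hyk : y ≤ (k : ℝ)) :
    quantile μ y ≤ x ↔ y ≤ cumMass μ x := by
  constructor
  · intro h
    have hq := quantile_mem hk h0 hm hyk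
    exact le_trans hq.2 (cumMass_mono h0 h)
  · intro h
    have hfne : (μ.support.filter (fun z => z ≤ x)).Nonempty := by
      rcases Finset.eq_empty_or_nonempty (μ.support.filter (fun z => z ≤ x)) with he | hne
      · exfalso; unfold cumMass at h; rw [he, Finset.sum_empty] at h; linarith
      · exact hne
    set a := (μ.support.filter (fun z => z ≤ x)).max' hfne with ha
    have hamem := (μ.support.filter (fun z => z ≤ x)).max'_mem hfne
    rw [Finset.mem_filter] at hamem
    have hcum : cumMass μ a = cumMass μ x := by
      unfold cumMass
      congr 1
      apply Finset.ext
      intro z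
      simp only [Finset.mem_filter]
      constructor
      · rintro ⟨hz, hza⟩; exact ⟨hz, le_trans hza hamem.2⟩
      · rintro ⟨hz, hzx⟩
        exact ⟨hz, Finset.le_max' (μ.support.filter (fun z => z ≤ x)) z (Finset.mem_filter.2 ⟨hz, hzx⟩)⟩
    have : a ∈ qset μ y := ⟨hamem.1, by rw [hcum]; exact h⟩
    exact le_trans (csInf_le (qset_finite μ y).bddBelow this) hamem.2

lemma quantile_mono (hk : 1 ≤ k) (h0 : ∀ x, 0 ≤ μ x)
    (hm : ∑ x ∈ μ.support, μ x = (k : ℝ)) {y y' : ℝ} (h : y ≤ y') (hy' : y' ≤ (k : ℝ)) :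
    quantile μ y ≤ quantile μ y' := by
  apply csInf_le_csInf (qset_finite μ y).bddBelow (qset_nonempty hk h0 hm hy')
  rintro x ⟨hx1, hx2⟩
  exact ⟨hx1, le_trans h hx2⟩

/-- Clamped quantile, globally monotone. -/
noncomputable def cQ (k : ℕ) (μ : ℝ →₀ ℝ) (y : ℝ) : ℝ := quantile μ (min y (k : ℝ))

lemma cQ_eq {y : ℝ} (hy : y ≤ (k : ℝ)) : cQ k μ y = quantile μ y := by
  unfold cQ; rw [min_eq_left hy]

lemma cQ_mono (hk : 1 ≤ k) (h0 : ∀ x, 0 ≤ μ x)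
    (hm : ∑ x ∈ μ.support, μ x = (k : ℝ)) : Monotone (cQ k μ) := by
  intro y y' h
  exact quantile_mono hk h0 hm (min_le_min_right _ h) (min_le_right _ _)

lemma cQ_mem_support (hk : 1 ≤ k) (h0 : ∀ x, 0 ≤ μ x)
    (hm : ∑ x ∈ μ.support, μ x = (k : ℝ)) (y : ℝ) : cQ k μ y ∈ μ.support :=
  (quantile_mem hk h0 hm (min_le_right _ _)).1

lemma quantile_eq_target (h0 : ∀ x, 0 ≤ μ x) {r y : ℝ} (hr : μ r ≠ 0)
    (h1 : cumMass μ r - μ r < y) (h2 : y ≤ cumMass μ r) : quantile μ y = r := by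
  have hrs : r ∈ μ.support := Finsupp.mem_support_iff.2 hr
  have hrf : r ∈ μ.support.filter (fun z => z ≤ r) :=
    Finset.mem_filter.2 ⟨hrs, le_refl r⟩
  have hkey : ∀ x : ℝ, x < r → cumMass μ x ≤ cumMass μ r - μ r := by
    intro x hx
    have hsub : μ.support.filter (fun z => z ≤ x) ⊆
        (μ.support.filter (fun z => z ≤ r)).erase r := by
      intro z hz
      rw [Finset.mem_filter] at hz
      refine Finset.mem_erase.2 ⟨?_, Finset.mem_filter.2 ⟨hz.1, le_trans hz.2 (le_of_lt hx)⟩⟩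
      intro hzr; rw [hzr] at hz; linarith [hz.2]
    calc cumMass μ x ≤ ∑ z ∈ (μ.support.filter (fun z => z ≤ r)).erase r, μ z :=
          Finset.sum_le_sum_of_subset_of_nonneg hsub (fun z _ _ => h0 z)
      _ = cumMass μ r - μ r := Finset.sum_erase_eq_sub hrf
  apply le_antisymm
  · exact csInf_le (qset_finite μ y).bddBelow ⟨hrs, h2⟩
  · apply le_csInf ⟨r, show r ∈ qset μ y from ⟨hrs, h2⟩⟩
    rintro x ⟨hxs, hxc⟩
    by_contra hlt
    push_neg at hlt
    have := hkey x hlt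
    linarith



lemma matchDistR_le_sum {k : ℕ} (a b : Fin k → ℝ) :
    matchDistR a b ≤ ∑ j, |a j - b j| := by
  have h := ciInf_le (f := fun σ : Equiv.Perm (Fin k) => ∑ j, |a j - b (σ j)|)
    (Set.finite_range _).bddBelow (Equiv.refl (Fin k))
  simpa [matchDistR] using h

lemma matchDistR_nonneg {k : ℕ} (a b : Fin k → ℝ) : 0 ≤ matchDistR a b :=
  le_ciInf fun _ => Finset.sum_nonneg fun _ _ => abs_nonneg _

lemma measurable_inf' {ι : Type*} (s : Finset ι) (hs : s.Nonempty) (f : ι → ℝ → ℝ)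
    (hf : ∀ i, Measurable (f i)) :
    Measurable fun x => s.inf' hs fun i => f i x := by
  induction hs using Finset.Nonempty.cons_induction with
  | singleton a => simpa using hf a
  | cons a s ha hs ih =>
    simp only [Finset.inf'_cons hs]
    exact Measurable.inf (hf a) ih

lemma matchDistR_eq_inf' {k : ℕ} (a b : Fin k → ℝ) :
    matchDistR a b = Finset.univ.inf' Finset.univ_nonempty
      (fun σ : Equiv.Perm (Fin k) => ∑ j, |a j - b (σ j)|) :=
  (Finset.inf'_univ_eq_ciInf _).symm

lemma measurable_matchDistR {k : ℕ} (f g : Fin k → ℝ → ℝ)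
    (hf : ∀ j, Measurable (f j)) (hg : ∀ j, Measurable (g j)) :
    Measurable fun ω => matchDistR (fun j => f j ω) (fun j => g j ω) := by
  simp only [matchDistR_eq_inf']
  apply measurable_inf'
  intro σ
  apply Finset.measurable_sum
  intro j _
  exact ((hf j).sub (hg (σ j))).abs

/-- Integral of the indicator of `Ico a b` over `Ioc c d`. -/
lemma integral_indicator_Ico {a b c d : ℝ} (hca : c < a) (hbd : b ≤ d) (hab : a ≤ b) :
    ∫ x in Set.Ioc c d, (Set.Ico a b).indicator (fun _ => (1 : ℝ)) x = b - a := by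
  rw [setIntegral_indicator measurableSet_Ico]
  have hset : Set.Ioc c d ∩ Set.Ico a b = Set.Ico a b := by
    apply Set.inter_eq_right.2
    intro x hx
    rcases hx with ⟨h1, h2⟩
    exact ⟨lt_of_lt_of_le hca h1, le_trans (le_of_lt h2) hbd⟩
  rw [hset, setIntegral_const, smul_eq_mul, mul_one, Real.volume_real_Ico_of_le hab]

lemma integral_indicator_Ioc {a b c d : ℝ} (hca : c ≤ a) (hbd : b ≤ d) (hab : a ≤ b) :
    ∫ x in Set.Ioc c d, (Set.Ioc a b).indicator (fun _ => (1 : ℝ)) x = b - a := by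
  rw [setIntegral_indicator measurableSet_Ioc]
  have hset : Set.Ioc c d ∩ Set.Ioc a b = Set.Ioc a b := by
    apply Set.inter_eq_right.2
    intro x hx
    rcases hx with ⟨h1, h2⟩
    exact ⟨lt_of_le_of_lt hca h1, le_trans h2 hbd⟩
  rw [hset, setIntegral_const, smul_eq_mul, mul_one, Real.volume_real_Ioc_of_le hab]

lemma abs_ite_sub_ite_x (a b x : ℝ) :
    |(if a ≤ x then (1:ℝ) else 0) - (if b ≤ x then 1 else 0)| =
      (Set.Ico (min a b) (max a b)).indicator (fun _ => (1 : ℝ)) x := by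
  rcases le_total a b with h | h
  · rw [min_eq_left h, max_eq_right h]
    by_cases h1 : a ≤ x
    · by_cases h2 : b ≤ x
      · have h3 : ¬ x < b := not_lt.2 h2
        norm_num [Set.indicator_apply, Set.mem_Ico, h1, h2, h3]
      · have h3 : x < b := not_le.1 h2
        norm_num [Set.indicator_apply, Set.mem_Ico, h1, h2, h3]
    · have h2 : ¬ b ≤ x := fun hb => h1 (le_trans h hb)
      norm_num [Set.indicator_apply, Set.mem_Ico, h1, h2]
  · rw [min_eq_right h, max_eq_left h]
    by_cases h2 : b ≤ x
    · by_cases h1 : a ≤ x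
      · have h3 : ¬ x < a := not_lt.2 h1
        norm_num [Set.indicator_apply, Set.mem_Ico, h1, h2, h3]
      · have h3 : x < a := not_le.1 h1
        norm_num [Set.indicator_apply, Set.mem_Ico, h1, h2, h3]
    · have h1 : ¬ a ≤ x := fun ha => h2 (le_trans h ha)
      norm_num [Set.indicator_apply, Set.mem_Ico, h1, h2]

lemma abs_ite_sub_ite_y (a b y : ℝ) :
    |(if y ≤ a then (1:ℝ) else 0) - (if y ≤ b then 1 else 0)| =
      (Set.Ioc (min a b) (max a b)).indicator (fun _ => (1 : ℝ)) y := by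
  rcases le_total a b with h | h
  · rw [min_eq_left h, max_eq_right h]
    by_cases h1 : y ≤ a
    · have h2 : y ≤ b := le_trans h1 h
      have h3 : ¬ a < y := not_lt.2 h1
      norm_num [Set.indicator_apply, Set.mem_Ioc, h1, h2, h3]
    · by_cases h2 : y ≤ b
      · have h3 : a < y := not_le.1 h1
        norm_num [Set.indicator_apply, Set.mem_Ioc, h1, h2, h3]
      · norm_num [Set.indicator_apply, Set.mem_Ioc, h1, h2]
  · rw [min_eq_right h, max_eq_left h]
    by_cases h2 : y ≤ b
    · have h1 : y ≤ a := le_trans h2 h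
      have h3 : ¬ b < y := not_lt.2 h2
      norm_num [Set.indicator_apply, Set.mem_Ioc, h1, h2, h3]
    · by_cases h1 : y ≤ a
      · have h3 : b < y := not_le.1 h2
        norm_num [Set.indicator_apply, Set.mem_Ioc, h1, h2, h3]
      · norm_num [Set.indicator_apply, Set.mem_Ioc, h1, h2]

/-- `∫ x in Ioc c d, |1_{a≤x} - 1_{b≤x}| = |a - b|` when `a, b ∈ (c, d]`. -/
lemma integral_abs_ite_x {a b c d : ℝ} (hca : c < a) (hcb : c < b) (had : a ≤ d) (hbd : b ≤ d) :
    ∫ x in Set.Ioc c d, |(if a ≤ x then (1:ℝ) else 0) - (if b ≤ x then 1 else 0)| = |a - b| := by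
  simp only [abs_ite_sub_ite_x]
  rw [integral_indicator_Ico (lt_min hca hcb) (max_le had hbd) (min_le_max)]
  rcases le_total a b with h | h
  · rw [min_eq_left h, max_eq_right h, abs_of_nonpos (by linarith)]; ring
  · rw [min_eq_right h, max_eq_left h, abs_of_nonneg (by linarith)]

lemma integral_abs_ite_y {a b c d : ℝ} (hca : c ≤ a) (hcb : c ≤ b) (had : a ≤ d) (hbd : b ≤ d) :
    ∫ y in Set.Ioc c d, |(if y ≤ a then (1:ℝ) else 0) - (if y ≤ b then 1 else 0)| = |a - b| := by
  simp only [abs_ite_sub_ite_y]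
  rw [integral_indicator_Ioc (le_min hca hcb) (max_le had hbd) (min_le_max)]
  rcases le_total a b with h | h
  · rw [min_eq_left h, max_eq_right h, abs_of_nonpos (by linarith)]; ring
  · rw [min_eq_right h, max_eq_left h, abs_of_nonneg (by linarith)]


lemma fst_mem_support {π : ℝ × ℝ →₀ ℝ} {A : ℝ →₀ ℝ} (hπ0 : ∀ p, 0 ≤ π p)
    (hπ1 : ∀ x, ∑ p ∈ π.support.filter (fun p => p.1 = x), π p = A x)
    {p : ℝ × ℝ} (hp : p ∈ π.support) : p.1 ∈ A.support := by
  have hpmem : p ∈ π.support.filter (fun q => q.1 = p.1) :=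
    Finset.mem_filter.2 ⟨hp, rfl⟩
  have hpos : 0 < π p := lt_of_le_of_ne (hπ0 p) (Ne.symm (Finsupp.mem_support_iff.1 hp))
  have hle : π p ≤ A p.1 := by
    rw [← hπ1 p.1]
    exact Finset.single_le_sum (fun q _ => hπ0 q) hpmem
  exact Finsupp.mem_support_iff.2 (ne_of_gt (lt_of_lt_of_le hpos hle))

lemma snd_mem_support {π : ℝ × ℝ →₀ ℝ} {B : ℝ →₀ ℝ} (hπ0 : ∀ p, 0 ≤ π p)
    (hπ2 : ∀ y, ∑ p ∈ π.support.filter (fun p => p.2 = y), π p = B y)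
    {p : ℝ × ℝ} (hp : p ∈ π.support) : p.2 ∈ B.support := by
  have hpmem : p ∈ π.support.filter (fun q => q.2 = p.2) :=
    Finset.mem_filter.2 ⟨hp, rfl⟩
  have hpos : 0 < π p := lt_of_le_of_ne (hπ0 p) (Ne.symm (Finsupp.mem_support_iff.1 hp))
  have hle : π p ≤ B p.2 := by
    rw [← hπ2 p.2]
    exact Finset.single_le_sum (fun q _ => hπ0 q) hpmem
  exact Finsupp.mem_support_iff.2 (ne_of_gt (lt_of_lt_of_le hpos hle))

lemma marginal_fst {π : ℝ × ℝ →₀ ℝ} {A : ℝ →₀ ℝ} (hπ0 : ∀ p, 0 ≤ π p)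
    (hπ1 : ∀ x, ∑ p ∈ π.support.filter (fun p => p.1 = x), π p = A x) (x : ℝ) :
    cumMass A x = ∑ p ∈ π.support, π p * (if p.1 ≤ x then 1 else 0) := by
  have h1 : ∑ p ∈ π.support, π p * (if p.1 ≤ x then (1:ℝ) else 0)
      = ∑ p ∈ π.support.filter (fun p => p.1 ≤ x), π p := by
    rw [Finset.sum_filter]
    congr 1; funext p
    by_cases h : p.1 ≤ x <;> simp [h]
  rw [h1]
  have h2 : ∑ a ∈ A.support.filter (fun a => a ≤ x),
      ∑ p ∈ (π.support.filter (fun p => p.1 ≤ x)).filter (fun p => p.1 = a), π p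
      = ∑ p ∈ π.support.filter (fun p => p.1 ≤ x), π p := by
    apply Finset.sum_fiberwise_of_maps_to
    intro p hp
    rw [Finset.mem_filter] at hp
    exact Finset.mem_filter.2 ⟨fst_mem_support hπ0 hπ1 hp.1, hp.2⟩
  rw [← h2]
  unfold cumMass
  apply Finset.sum_congr rfl
  intro a ha
  rw [Finset.mem_filter] at ha
  rw [← hπ1 a]
  congr 1
  rw [Finset.filter_filter]
  apply Finset.filter_congr
  intro p _
  constructor
  · exact fun h => ⟨by rw [h]; exact ha.2, h⟩
  · exact And.right

lemma marginal_snd {π : ℝ × ℝ →₀ ℝ} {B : ℝ →₀ ℝ} (hπ0 : ∀ p, 0 ≤ π p)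
    (hπ2 : ∀ y, ∑ p ∈ π.support.filter (fun p => p.2 = y), π p = B y) (x : ℝ) :
    cumMass B x = ∑ p ∈ π.support, π p * (if p.2 ≤ x then 1 else 0) := by
  have h1 : ∑ p ∈ π.support, π p * (if p.2 ≤ x then (1:ℝ) else 0)
      = ∑ p ∈ π.support.filter (fun p => p.2 ≤ x), π p := by
    rw [Finset.sum_filter]
    congr 1; funext p
    by_cases h : p.2 ≤ x <;> simp [h]
  rw [h1]
  have h2 : ∑ a ∈ B.support.filter (fun a => a ≤ x),
      ∑ p ∈ (π.support.filter (fun p => p.2 ≤ x)).filter (fun p => p.2 = a), π p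
      = ∑ p ∈ π.support.filter (fun p => p.2 ≤ x), π p := by
    apply Finset.sum_fiberwise_of_maps_to
    intro p hp
    rw [Finset.mem_filter] at hp
    exact Finset.mem_filter.2 ⟨snd_mem_support hπ0 hπ2 hp.1, hp.2⟩
  rw [← h2]
  unfold cumMass
  apply Finset.sum_congr rfl
  intro a ha
  rw [Finset.mem_filter] at ha
  rw [← hπ2 a]
  congr 1
  rw [Finset.filter_filter]
  apply Finset.filter_congr
  intro p _
  constructor
  · exact fun h => ⟨by rw [h]; exact ha.2, h⟩
  · exact And.right

lemma key_cost_lower (k : ℕ) (hk : 1 ≤ k) (A B : ℝ →₀ ℝ)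
    (hA0 : ∀ x, 0 ≤ A x) (hAk : ∑ x ∈ A.support, A x = (k : ℝ))
    (hB0 : ∀ x, 0 ≤ B x) (hBk : ∑ x ∈ B.support, B x = (k : ℝ))
    (π : ℝ × ℝ →₀ ℝ) (hπ0 : ∀ p, 0 ≤ π p)
    (hπ1 : ∀ x, ∑ p ∈ π.support.filter (fun p => p.1 = x), π p = A x)
    (hπ2 : ∀ y, ∑ p ∈ π.support.filter (fun p => p.2 = y), π p = B y) :
    ∫ y in Set.Ioc (0:ℝ) (k:ℝ), |cQ k A y - cQ k B y| ≤
      ∑ p ∈ π.support, π p * |p.1 - p.2| := by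
  classical
  -- bound M on the supports
  set S : Finset ℝ := A.support ∪ B.support with hS
  have hSne : S.Nonempty := Finset.Nonempty.mono Finset.subset_union_left
    (support_nonempty hk hAk)
  set M : ℝ := S.sup' hSne (fun x => |x|) + 1 with hM
  have hbnd : ∀ x ∈ S, -M < x ∧ x < M := by
    intro x hx
    have h1 : |x| ≤ S.sup' hSne (fun x => |x|) := Finset.le_sup' _ hx
    rw [abs_le] at h1
    constructor <;> [skip; skip] <;> rw [hM] <;> linarith [h1.1, h1.2]
  have hApt : ∀ a ∈ A.support, -M < a ∧ a < M :=
    fun a ha => hbnd a (Finset.mem_union_left _ ha)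
  have hBpt : ∀ a ∈ B.support, -M < a ∧ a < M :=
    fun a ha => hbnd a (Finset.mem_union_right _ ha)
  have hkpos : (0:ℝ) < (k:ℝ) := by exact_mod_cast Nat.pos_of_ne_zero (by omega)
  -- CDFs
  have hF1m : Monotone (cumMass A) := fun x y h => cumMass_mono hA0 h
  have hF2m : Monotone (cumMass B) := fun x y h => cumMass_mono hB0 h
  have hF1meas : Measurable (cumMass A) := hF1m.measurable
  have hF2meas : Measurable (cumMass B) := hF2m.measurable
  have hF1range : ∀ x, 0 ≤ cumMass A x ∧ cumMass A x ≤ (k:ℝ) := fun x =>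
    ⟨cumMass_nonneg hA0 x, by rw [← hAk]; exact cumMass_le_total hA0 x⟩
  have hF2range : ∀ x, 0 ≤ cumMass B x ∧ cumMass B x ≤ (k:ℝ) := fun x =>
    ⟨cumMass_nonneg hB0 x, by rw [← hBk]; exact cumMass_le_total hB0 x⟩
  set Φ : ℝ → ℝ → ℝ := fun x y =>
    |(if y ≤ cumMass A x then (1:ℝ) else 0) - (if y ≤ cumMass B x then 1 else 0)| with hΦ
  -- claim 1
  have claim1 : ∀ y ∈ Set.Ioc (0:ℝ) (k:ℝ),
      |cQ k A y - cQ k B y| = ∫ x in Set.Ioc (-M) M, Φ x y := by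
    intro y hy
    have hq1 := cQ_mem_support (μ := A) hk hA0 hAk y
    have hq2 := cQ_mem_support (μ := B) hk hB0 hBk y
    have e1 : ∀ x : ℝ, (if y ≤ cumMass A x then (1:ℝ) else 0)
        = (if cQ k A y ≤ x then 1 else 0) := by
      intro x
      rw [cQ_eq hy.2]
      exact (if_congr (quantile_le_iff hk hA0 hAk hy.1 hy.2) rfl rfl).symm
    have e2 : ∀ x : ℝ, (if y ≤ cumMass B x then (1:ℝ) else 0)
        = (if cQ k B y ≤ x then 1 else 0) := by
      intro x
      rw [cQ_eq hy.2]
      exact (if_congr (quantile_le_iff hk hB0 hBk hy.1 hy.2) rfl rfl).symm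
    have : (fun x => Φ x y) = fun x =>
        |(if cQ k A y ≤ x then (1:ℝ) else 0) - (if cQ k B y ≤ x then 1 else 0)| := by
      funext x; rw [hΦ]; dsimp only; rw [e1 x, e2 x]
    rw [show (∫ x in Set.Ioc (-M) M, Φ x y) = _ from congrArg _ this]
    exact (integral_abs_ite_x (hApt _ hq1).1 (hBpt _ hq2).1
      (le_of_lt (hApt _ hq1).2) (le_of_lt (hBpt _ hq2).2)).symm
  -- claim 2
  have claim2 : ∀ x : ℝ, ∫ y in Set.Ioc (0:ℝ) (k:ℝ), Φ x y
      = |cumMass A x - cumMass B x| := by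
    intro x
    exact integral_abs_ite_y (hF1range x).1 (hF2range x).1 (hF1range x).2 (hF2range x).2
  -- measurability of Φ (uncurried, as a function of (y, x))
  have hΦmeas : Measurable (Function.uncurry fun y x => Φ x y) := by
    apply Measurable.abs
    apply Measurable.sub
    · exact Measurable.ite (measurableSet_le measurable_fst (hF1meas.comp measurable_snd))
        measurable_const measurable_const
    · exact Measurable.ite (measurableSet_le measurable_fst (hF2meas.comp measurable_snd))
        measurable_const measurable_const
  haveI : IsFiniteMeasure (volume.restrict (Set.Ioc (0:ℝ) (k:ℝ))) :=
    ⟨by rw [Measure.restrict_apply_univ]; exact measure_Ioc_lt_top⟩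
  haveI : IsFiniteMeasure (volume.restrict (Set.Ioc (-M) M)) :=
    ⟨by rw [Measure.restrict_apply_univ]; exact measure_Ioc_lt_top⟩
  have hΦint : Integrable (Function.uncurry fun y x => Φ x y)
      ((volume.restrict (Set.Ioc (0:ℝ) (k:ℝ))).prod (volume.restrict (Set.Ioc (-M) M))) := by
    apply Integrable.mono' (integrable_const (2:ℝ)) hΦmeas.aestronglyMeasurable
    apply ae_of_all
    rintro ⟨y, x⟩
    simp only [Function.uncurry, hΦ, Real.norm_eq_abs, abs_abs]
    have h1 : |(if y ≤ cumMass A x then (1:ℝ) else 0)| ≤ 1 := by split_ifs <;> norm_num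
    have h2 : |(if y ≤ cumMass B x then (1:ℝ) else 0)| ≤ 1 := by split_ifs <;> norm_num
    calc |(if y ≤ cumMass A x then (1:ℝ) else 0) - (if y ≤ cumMass B x then 1 else 0)|
        ≤ |(if y ≤ cumMass A x then (1:ℝ) else 0)| + |(if y ≤ cumMass B x then (1:ℝ) else 0)| :=
          abs_sub _ _
      _ ≤ 2 := by linarith
  have swap : ∫ y in Set.Ioc (0:ℝ) (k:ℝ), ∫ x in Set.Ioc (-M) M, Φ x y
      = ∫ x in Set.Ioc (-M) M, ∫ y in Set.Ioc (0:ℝ) (k:ℝ), Φ x y :=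
    integral_integral_swap hΦint
  -- pointwise bound for the CDF distance
  have hpt : ∀ x : ℝ, |cumMass A x - cumMass B x| ≤
      ∑ p ∈ π.support, π p * |(if p.1 ≤ x then (1:ℝ) else 0) - (if p.2 ≤ x then 1 else 0)| := by
    intro x
    rw [marginal_fst hπ0 hπ1 x, marginal_snd hπ0 hπ2 x, ← Finset.sum_sub_distrib]
    refine le_trans (Finset.abs_sum_le_sum_abs _ _) ?_
    apply Finset.sum_le_sum
    intro p _
    rw [← mul_sub, abs_mul, abs_of_nonneg (hπ0 p)]
  -- integrabilities on the x side
  have hint1 : IntegrableOn (fun x => |cumMass A x - cumMass B x|) (Set.Ioc (-M) M) := by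
    apply Measure.integrableOn_of_bounded (M := 2*(k:ℝ)) measure_Ioc_lt_top.ne
      ((hF1meas.sub hF2meas).abs).aestronglyMeasurable
    apply ae_of_all
    intro x
    rw [Real.norm_eq_abs, abs_abs, abs_le, Pi.sub_apply]
    have h1 := hF1range x; have h2 := hF2range x
    constructor <;> linarith [h1.1, h1.2, h2.1, h2.2]
  have hep : ∀ p : ℝ × ℝ, IntegrableOn
      (fun x => |(if p.1 ≤ x then (1:ℝ) else 0) - (if p.2 ≤ x then 1 else 0)|)
      (Set.Ioc (-M) M) := by
    intro p
    apply Measure.integrableOn_of_bounded (M := (2:ℝ)) measure_Ioc_lt_top.ne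
    · apply Measurable.aestronglyMeasurable
      apply Measurable.abs
      exact (Measurable.ite measurableSet_Ici measurable_const measurable_const).sub
        (Measurable.ite measurableSet_Ici measurable_const measurable_const)
    · apply ae_of_all
      intro x
      rw [Real.norm_eq_abs, abs_abs]
      have h1 : |(if p.1 ≤ x then (1:ℝ) else 0)| ≤ 1 := by split_ifs <;> norm_num
      have h2 : |(if p.2 ≤ x then (1:ℝ) else 0)| ≤ 1 := by split_ifs <;> norm_num
      calc |(if p.1 ≤ x then (1:ℝ) else 0) - (if p.2 ≤ x then 1 else 0)|
          ≤ |(if p.1 ≤ x then (1:ℝ) else 0)| + |(if p.2 ≤ x then (1:ℝ) else 0)| := abs_sub _ _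
        _ ≤ 2 := by linarith
  have hint2 : IntegrableOn (fun x => ∑ p ∈ π.support,
      π p * |(if p.1 ≤ x then (1:ℝ) else 0) - (if p.2 ≤ x then 1 else 0)|)
      (Set.Ioc (-M) M) := by
    apply integrable_finset_sum
    intro p _
    exact (hep p).const_mul (π p)
  calc ∫ y in Set.Ioc (0:ℝ) (k:ℝ), |cQ k A y - cQ k B y|
      = ∫ y in Set.Ioc (0:ℝ) (k:ℝ), ∫ x in Set.Ioc (-M) M, Φ x y :=
        setIntegral_congr_fun measurableSet_Ioc claim1
    _ = ∫ x in Set.Ioc (-M) M, ∫ y in Set.Ioc (0:ℝ) (k:ℝ), Φ x y := swap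
    _ = ∫ x in Set.Ioc (-M) M, |cumMass A x - cumMass B x| := by
        apply setIntegral_congr_fun measurableSet_Ioc
        intro x _
        exact claim2 x
    _ ≤ ∫ x in Set.Ioc (-M) M, ∑ p ∈ π.support,
          π p * |(if p.1 ≤ x then (1:ℝ) else 0) - (if p.2 ≤ x then 1 else 0)| :=
        setIntegral_mono hint1 hint2 hpt
    _ = ∑ p ∈ π.support, π p * |p.1 - p.2| := by
        rw [integral_finset_sum _ (fun p _ => (hep p).const_mul (π p))]
        apply Finset.sum_congr rfl
        intro p hp
        rw [MeasureTheory.integral_const_mul]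
        congr 1
        have h1 := hApt _ (fst_mem_support hπ0 hπ1 hp)
        have h2 := hBpt _ (snd_mem_support hπ0 hπ2 hp)
        exact integral_abs_ite_x h1.1 h2.1 (le_of_lt h1.2) (le_of_lt h2.2)

section OmegaSide

variable {k : ℕ} {A B : ℝ →₀ ℝ}

/-- A uniform bound on support points. -/
lemma exists_bound (hk : 1 ≤ k) (hAk : ∑ x ∈ A.support, A x = (k : ℝ)) :
    ∃ M : ℝ, 0 < M ∧ (∀ a ∈ A.support, |a| ≤ M) ∧ (∀ a ∈ B.support, |a| ≤ M) := by
  classical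
  set S : Finset ℝ := A.support ∪ B.support with hS
  rcases Finset.eq_empty_or_nonempty S with he | hSne
  · exact ⟨1, one_pos,
      fun a ha => absurd (Finset.mem_union_left _ ha) (by rw [← hS, he]; simp),
      fun a ha => absurd (Finset.mem_union_right _ ha) (by rw [← hS, he]; simp)⟩
  · refine ⟨S.sup' hSne (fun x => |x|) + 1, ?_, ?_, ?_⟩
    · obtain ⟨x, hx⟩ := hSne
      have := Finset.le_sup' (fun x => |x|) hx
      have := abs_nonneg x
      linarith
    · intro a ha
      have := Finset.le_sup' (fun x => |x|) (Finset.mem_union_left B.support ha)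
      linarith
    · intro a ha
      have := Finset.le_sup' (fun x => |x|) (Finset.mem_union_right A.support ha)
      linarith

lemma D_integrableOn (hk : 1 ≤ k)
    (hA0 : ∀ x, 0 ≤ A x) (hAk : ∑ x ∈ A.support, A x = (k : ℝ))
    (hB0 : ∀ x, 0 ≤ B x) (hBk : ∑ x ∈ B.support, B x = (k : ℝ)) :
    IntegrableOn (fun ω => matchDistR (fun j : Fin k => cQ k A (ω + (j : ℕ)))
      (fun j : Fin k => cQ k B (ω + (j : ℕ)))) (Set.Ioc (0:ℝ) 1) := by
  obtain ⟨M, hM0, hMA, hMB⟩ := exists_bound (B := B) hk hAk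
  have hmeas : Measurable (fun ω => matchDistR (fun j : Fin k => cQ k A (ω + (j : ℕ)))
      (fun j : Fin k => cQ k B (ω + (j : ℕ)))) := by
    apply measurable_matchDistR
    · exact fun j => ((cQ_mono hk hA0 hAk).measurable).comp (measurable_add_const _)
    · exact fun j => ((cQ_mono hk hB0 hBk).measurable).comp (measurable_add_const _)
  apply Measure.integrableOn_of_bounded (M := 2*M*k) measure_Ioc_lt_top.ne
    hmeas.aestronglyMeasurable
  apply ae_of_all
  intro ω
  rw [Real.norm_eq_abs, abs_of_nonneg (matchDistR_nonneg _ _)]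
  calc matchDistR (fun j : Fin k => cQ k A (ω + (j : ℕ))) (fun j : Fin k => cQ k B (ω + (j : ℕ)))
      ≤ ∑ j : Fin k, |cQ k A (ω + (j : ℕ)) - cQ k B (ω + (j : ℕ))| := matchDistR_le_sum _ _
    _ ≤ ∑ _j : Fin k, 2*M := by
        apply Finset.sum_le_sum
        intro j _
        have h1 := hMA _ (cQ_mem_support hk hA0 hAk (ω + (j : ℕ)))
        have h2 := hMB _ (cQ_mem_support hk hB0 hBk (ω + (j : ℕ)))
        calc |cQ k A (ω + (j : ℕ)) - cQ k B (ω + (j : ℕ))|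
            ≤ |cQ k A (ω + (j : ℕ))| + |cQ k B (ω + (j : ℕ))| := abs_sub _ _
          _ ≤ 2*M := by linarith
    _ = 2*M*k := by rw [Finset.sum_const, Finset.card_univ, Fintype.card_fin,
          nsmul_eq_mul, mul_comm]

lemma abs_cQ_integrableOn (hk : 1 ≤ k)
    (hA0 : ∀ x, 0 ≤ A x) (hAk : ∑ x ∈ A.support, A x = (k : ℝ))
    (hB0 : ∀ x, 0 ≤ B x) (hBk : ∑ x ∈ B.support, B x = (k : ℝ)) (a b : ℝ) :
    IntegrableOn (fun y => |cQ k A y - cQ k B y|) (Set.Ioc a b) := by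
  obtain ⟨M, hM0, hMA, hMB⟩ := exists_bound (B := B) hk hAk
  apply Measure.integrableOn_of_bounded (M := 2*M) measure_Ioc_lt_top.ne
    (((cQ_mono hk hA0 hAk).measurable.sub (cQ_mono hk hB0 hBk).measurable).abs).aestronglyMeasurable
  apply ae_of_all
  intro y
  rw [Real.norm_eq_abs, abs_abs]
  have h1 := hMA _ (cQ_mem_support hk hA0 hAk y)
  have h2 := hMB _ (cQ_mem_support hk hB0 hBk y)
  calc |cQ k A y - cQ k B y| ≤ |cQ k A y| + |cQ k B y| := abs_sub _ _
    _ ≤ 2*M := by linarith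

lemma omega_side (hk : 1 ≤ k)
    (hA0 : ∀ x, 0 ≤ A x) (hAk : ∑ x ∈ A.support, A x = (k : ℝ))
    (hB0 : ∀ x, 0 ≤ B x) (hBk : ∑ x ∈ B.support, B x = (k : ℝ)) :
    ∫ ω in Set.Ioc (0:ℝ) 1, matchDistR (fun j : Fin k => cQ k A (ω + (j : ℕ)))
        (fun j : Fin k => cQ k B (ω + (j : ℕ)))
      ≤ ∫ y in Set.Ioc (0:ℝ) (k:ℝ), |cQ k A y - cQ k B y| := by
  have habs := abs_cQ_integrableOn hk hA0 hAk hB0 hBk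
  have hterm : ∀ j : Fin k, IntegrableOn
      (fun ω => |cQ k A (ω + (j : ℕ)) - cQ k B (ω + (j : ℕ))|) (Set.Ioc (0:ℝ) 1) := by
    intro j
    obtain ⟨M, hM0, hMA, hMB⟩ := exists_bound (B := B) hk hAk
    apply Measure.integrableOn_of_bounded (M := 2*M) measure_Ioc_lt_top.ne
    · apply Measurable.aestronglyMeasurable
      apply Measurable.abs
      exact (((cQ_mono hk hA0 hAk).measurable).comp (measurable_add_const _)).sub
        (((cQ_mono hk hB0 hBk).measurable).comp (measurable_add_const _))
    · apply ae_of_all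
      intro y
      rw [Real.norm_eq_abs, abs_abs]
      have h1 := hMA _ (cQ_mem_support hk hA0 hAk (y + (j:ℕ)))
      have h2 := hMB _ (cQ_mem_support hk hB0 hBk (y + (j:ℕ)))
      calc |cQ k A (y + (j:ℕ)) - cQ k B (y + (j:ℕ))|
          ≤ |cQ k A (y + (j:ℕ))| + |cQ k B (y + (j:ℕ))| := abs_sub _ _
        _ ≤ 2*M := by linarith
  calc ∫ ω in Set.Ioc (0:ℝ) 1, matchDistR (fun j : Fin k => cQ k A (ω + (j : ℕ)))
        (fun j : Fin k => cQ k B (ω + (j : ℕ)))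
      ≤ ∫ ω in Set.Ioc (0:ℝ) 1, ∑ j : Fin k, |cQ k A (ω + (j:ℕ)) - cQ k B (ω + (j:ℕ))| := by
        apply setIntegral_mono (D_integrableOn hk hA0 hAk hB0 hBk)
          (integrable_finset_sum _ (fun j _ => hterm j))
        intro ω
        exact matchDistR_le_sum _ _
    _ = ∑ j : Fin k, ∫ ω in Set.Ioc (0:ℝ) 1, |cQ k A (ω + (j:ℕ)) - cQ k B (ω + (j:ℕ))| :=
        integral_finset_sum _ (fun j _ => hterm j)
    _ = ∑ j ∈ Finset.range k, ∫ y in ((j:ℕ):ℝ)..(((j:ℕ):ℝ) + 1), |cQ k A y - cQ k B y| := by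
        rw [← Fin.sum_univ_eq_sum_range
          (fun j => ∫ y in ((j:ℕ):ℝ)..(((j:ℕ):ℝ) + 1), |cQ k A y - cQ k B y|)]
        apply Finset.sum_congr rfl
        intro j _
        rw [← intervalIntegral.integral_of_le zero_le_one]
        rw [intervalIntegral.integral_comp_add_right (fun y => |cQ k A y - cQ k B y|) ((j:ℕ):ℝ)]
        rw [zero_add, add_comm 1 ((j:ℕ):ℝ)]
    _ = ∑ j ∈ Finset.range k, ∫ y in ((j:ℕ):ℝ)..((((j+1):ℕ)):ℝ), |cQ k A y - cQ k B y| := by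
        apply Finset.sum_congr rfl
        intro j _
        norm_num
    _ = ∫ y in (((0:ℕ)):ℝ)..(((k:ℕ)):ℝ), |cQ k A y - cQ k B y| := by
        apply intervalIntegral.sum_integral_adjacent_intervals (a := fun n : ℕ => (n:ℝ))
        intro i _
        rw [intervalIntegrable_iff_integrableOn_Ioc_of_le (by push_cast; linarith)]
        exact habs _ _
    _ = ∫ y in Set.Ioc (0:ℝ) (k:ℝ), |cQ k A y - cQ k B y| := by
        rw [intervalIntegral.integral_of_le (by exact_mod_cast Nat.zero_le k)]
        norm_num

end OmegaSide

section Coupling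

variable {k : ℕ} {A B : ℝ →₀ ℝ}

lemma coupling_exists (hk : 1 ≤ k)
    (hA0 : ∀ x, 0 ≤ A x) (hAk : ∑ x ∈ A.support, A x = (k : ℝ))
    (hB0 : ∀ x, 0 ≤ B x) (hBk : ∑ x ∈ B.support, B x = (k : ℝ)) :
    {c | ∃ π : ℝ × ℝ →₀ ℝ, (∀ p, 0 ≤ π p) ∧
      (∀ x, ∑ p ∈ π.support.filter (fun p => p.1 = x), π p = A x) ∧
      (∀ y, ∑ p ∈ π.support.filter (fun p => p.2 = y), π p = B y) ∧
      c = ∑ p ∈ π.support, π p * |p.1 - p.2|}.Nonempty := by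
  classical
  have hk0 : (k:ℝ) ≠ 0 := by
    have : (0:ℝ) < (k:ℝ) := by exact_mod_cast Nat.pos_of_ne_zero (by omega)
    linarith
  set π : ℝ × ℝ →₀ ℝ := Finsupp.onFinset (A.support ×ˢ B.support)
    (fun p => A p.1 * B p.2 / (k:ℝ))
    (fun p hp => by
      rw [Finset.mem_product]
      constructor
      · apply Finsupp.mem_support_iff.2
        intro h0; apply hp; show A p.1 * B p.2 / (k:ℝ) = 0; rw [h0]; ring
      · apply Finsupp.mem_support_iff.2
        intro h0; apply hp; show A p.1 * B p.2 / (k:ℝ) = 0; rw [h0]; ring) with hπdef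
  have hπapp : ∀ p : ℝ × ℝ, π p = A p.1 * B p.2 / (k:ℝ) := fun p => rfl
  have hπsupp : π.support = A.support ×ˢ B.support := by
    apply Finset.Subset.antisymm
    · exact Finsupp.support_onFinset_subset
    · intro p hp
      rw [Finset.mem_product] at hp
      apply Finsupp.mem_support_iff.2
      rw [hπapp]
      exact div_ne_zero (mul_ne_zero (Finsupp.mem_support_iff.1 hp.1)
        (Finsupp.mem_support_iff.1 hp.2)) hk0
  refine ⟨∑ p ∈ π.support, π p * |p.1 - p.2|, π, ?_, ?_, ?_, rfl⟩
  · intro p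
    rw [hπapp]
    exact div_nonneg (mul_nonneg (hA0 _) (hB0 _)) (Nat.cast_nonneg k)
  · intro x
    rw [hπsupp]
    have hfe : (A.support ×ˢ B.support).filter (fun p => p.1 = x)
        = (A.support.filter (fun a => a = x)) ×ˢ B.support := by
      ext p
      simp only [Finset.mem_filter, Finset.mem_product]
      tauto
    rw [hfe, Finset.filter_eq']
    by_cases hx : x ∈ A.support
    · rw [if_pos hx, Finset.sum_product, Finset.sum_singleton]
      have : ∀ b ∈ B.support, π (x, b) = A x / (k:ℝ) * B b := by
        intro b _; rw [hπapp]; ring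
      rw [Finset.sum_congr rfl this, ← Finset.mul_sum, hBk]
      field_simp
    · rw [if_neg hx]
      simp only [Finset.empty_product, Finset.sum_empty]
      exact (Finsupp.notMem_support_iff.1 hx).symm
  · intro y
    rw [hπsupp]
    have hfe : (A.support ×ˢ B.support).filter (fun p => p.2 = y)
        = A.support ×ˢ (B.support.filter (fun b => b = y)) := by
      ext p
      simp only [Finset.mem_filter, Finset.mem_product]
      tauto
    rw [hfe, Finset.filter_eq']
    by_cases hy : y ∈ B.support
    · rw [if_pos hy, Finset.sum_product]
      have : ∀ a ∈ A.support, (∑ b ∈ ({y} : Finset ℝ), π (a, b)) = B y / (k:ℝ) * A a := by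
        intro a _; rw [Finset.sum_singleton, hπapp]; ring
      rw [Finset.sum_congr rfl this, ← Finset.mul_sum, hAk]
      field_simp
    · rw [if_neg hy]
      simp only [Finset.product_empty, Finset.sum_empty]
      exact (Finsupp.notMem_support_iff.1 hy).symm

lemma step_le_transport (hk : 1 ≤ k)
    (hA0 : ∀ x, 0 ≤ A x) (hAk : ∑ x ∈ A.support, A x = (k : ℝ))
    (hB0 : ∀ x, 0 ≤ B x) (hBk : ∑ x ∈ B.support, B x = (k : ℝ)) :
    ∫ ω in Set.Ioc (0:ℝ) 1, matchDistR (fun j : Fin k => cQ k A (ω + (j : ℕ)))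
        (fun j : Fin k => cQ k B (ω + (j : ℕ)))
      ≤ transportCost A B := by
  unfold transportCost
  apply le_csInf (coupling_exists hk hA0 hAk hB0 hBk)
  rintro c ⟨π, hπ0, hπ1, hπ2, rfl⟩
  exact le_trans (omega_side hk hA0 hAk hB0 hBk)
    (key_cost_lower k hk A B hA0 hAk hB0 hBk π hπ0 hπ1 hπ2)

lemma serve (hk : 1 ≤ k) (hA0 : ∀ x, 0 ≤ A x)
    (hAk : ∑ x ∈ A.support, A x = (k : ℝ)) {r ω : ℝ} (hr : 1 ≤ A r)
    (hω : ω ∈ Set.Ioc (0:ℝ) 1) :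
    ∃ j : Fin k, quantile A (ω + (j : ℕ)) = r := by
  have hrne : A r ≠ 0 := by intro h; rw [h] at hr; linarith
  have hrs : r ∈ A.support := Finsupp.mem_support_iff.2 hrne
  set c := cumMass A r with hc
  have hrc : A r ≤ c := by
    rw [hc]
    unfold cumMass
    exact Finset.single_le_sum (fun z _ => hA0 z)
      (Finset.mem_filter.2 ⟨hrs, le_refl r⟩)
  have hck : c ≤ (k:ℝ) := by rw [hc, ← hAk]; exact cumMass_le_total hA0 r
  set m : ℤ := ⌊c - ω⌋ with hm
  have hm0 : 0 ≤ m := by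
    rw [hm]
    apply Int.le_floor.2
    push_cast
    linarith [hω.2]
  have hmle : (m:ℝ) ≤ c - ω := Int.floor_le _
  have hmgt : c - A r - ω < (m:ℝ) := by
    have := Int.sub_one_lt_floor (c - ω)
    rw [← hm] at this
    linarith
  have hmk : m.toNat < k := by
    have h1 : (m:ℝ) < (k:ℝ) := by linarith [hω.1]
    have h2 : m < (k:ℤ) := by exact_mod_cast h1
    omega
  refine ⟨⟨m.toNat, hmk⟩, ?_⟩
  have hcast : ((m.toNat : ℕ) : ℝ) = (m:ℝ) := by
    exact_mod_cast congrArg (fun z : ℤ => (z:ℝ)) (Int.toNat_of_nonneg hm0)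
  apply quantile_eq_target hA0 hrne
  · rw [hcast] at *
    show c - A r < ω + (m:ℝ)
    linarith
  · show ω + ((m.toNat : ℕ) : ℝ) ≤ c
    rw [hcast]
    linarith

end Coupling

end Round15

open Round15

/-- for fractional configurations `μ_0, …, μ_t` of mass `k` on the
line with `μ_i(r_i) ≥ 1`, there exists `ω ∈ (0, 1]` such that every rounded
configuration `I_ω(μ_i)` contains a server at `r_i` and the total movement of
the rounded configurations is at most the fractional movement cost. -/
theorem exists_omega_rounded_serves_and_cost_le {k t : ℕ} (hk : 1 ≤ k)
    (μ : Fin (t + 1) → ℝ →₀ ℝ)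
    (hμ0 : ∀ i, ∀ x, 0 ≤ μ i x) (hμk : ∀ i, ∑ x ∈ (μ i).support, μ i x = k)
    (r : Fin t → ℝ) (hr : ∀ i : Fin t, 1 ≤ μ i.succ (r i)) :
    ∃ ω ∈ Set.Ioc (0 : ℝ) 1,
      (∀ i : Fin t, ∃ j : Fin k, quantile (μ i.succ) (ω + (j : ℕ)) = r i) ∧
      ∑ i : Fin t, matchDistR (roundCfg k (μ i.castSucc) ω) (roundCfg k (μ i.succ) ω) ≤
        ∑ i : Fin t, transportCost (μ i.castSucc) (μ i.succ) := by
  classical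
  set D : Fin t → ℝ → ℝ := fun i ω =>
    matchDistR (fun j : Fin k => cQ k (μ i.castSucc) (ω + (j : ℕ)))
      (fun j : Fin k => cQ k (μ i.succ) (ω + (j : ℕ))) with hD
  have hDint : ∀ i : Fin t, IntegrableOn (D i) (Set.Ioc (0:ℝ) 1) := fun i =>
    D_integrableOn hk (hμ0 _) (hμk _) (hμ0 _) (hμk _)
  set G : ℝ → ℝ := fun ω => ∑ i : Fin t, D i ω with hG
  have hGint : IntegrableOn G (Set.Ioc (0:ℝ) 1) :=
    integrable_finset_sum _ (fun i _ => hDint i)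
  have hvol : volume (Set.Ioc (0:ℝ) 1) = 1 := by
    rw [Real.volume_Ioc]; norm_num
  obtain ⟨ω, hω, hωle⟩ := exists_le_setAverage (μ := volume) (s := Set.Ioc (0:ℝ) 1)
    (by rw [hvol]; norm_num) (by rw [hvol]; norm_num) hGint
  have havg : ⨍ a in Set.Ioc (0:ℝ) 1, G a = ∫ a in Set.Ioc (0:ℝ) 1, G a := by
    rw [setAverage_eq, measureReal_def, hvol]
    simp
  refine ⟨ω, hω, fun i => serve hk (hμ0 _) (hμk _) (hr i) hω, ?_⟩
  have hjk : ∀ j : Fin k, ω + ((j : ℕ) : ℝ) ≤ (k : ℝ) := by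
    intro j
    have h1 : ((j : ℕ) : ℝ) + 1 ≤ (k : ℝ) := by exact_mod_cast j.isLt
    linarith [hω.2]
  have h1 : ∑ i : Fin t, matchDistR (roundCfg k (μ i.castSucc) ω) (roundCfg k (μ i.succ) ω)
      = G ω := by
    apply Finset.sum_congr rfl
    intro i _
    show matchDistR (roundCfg k (μ i.castSucc) ω) (roundCfg k (μ i.succ) ω) = D i ω
    rw [hD]
    unfold roundCfg
    congr 1 <;> funext j <;> rw [cQ_eq (hjk j)]
  rw [h1]
  calc G ω ≤ ⨍ a in Set.Ioc (0:ℝ) 1, G a := hωle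
    _ = ∫ a in Set.Ioc (0:ℝ) 1, G a := havg
    _ = ∑ i : Fin t, ∫ a in Set.Ioc (0:ℝ) 1, D i a :=
        integral_finset_sum _ (fun i _ => hDint i)
    _ ≤ ∑ i : Fin t, transportCost (μ i.castSucc) (μ i.succ) := by
        apply Finset.sum_le_sum
        intro i _
        exact step_le_transport hk (hμ0 _) (hμk _) (hμ0 _) (hμk _)
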